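/- Let p be a prime, R a commutative ring of characteristic p, and σ a finite index type. Then for every n : σ →₀ ℕ and every f ∈ MvPolynomial σ R, the divided-power operators satisfy D_{p•n}(f^p) = (D_n f)^p, where p•n denotes the componentwise multiple of n by p. -/

import Mathlib

/-- The divided-power operator `D_n` on `MvPolynomial σ R`, determined on monomials by
`D_n (X ^ m) = (∏ i, Nat.choose (m i) (n i)) • X ^ (m - n)` (componentwise truncated
subtraction). -/
noncomputable def dpOp (R : Type*) [CommRing R] (σ : Type*) [Fintype σ] (n : σ →₀ ℕ) :
    MvPolynomial σ R →ₗ[R] MvPolynomial σ R :=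
  Finsupp.lsum ℕ (fun m : σ →₀ ℕ =>
    (∏ i, Nat.choose (m i) (n i)) • (MvPolynomial.monomial (m - n) : R →ₗ[R] MvPolynomial σ R))
    ∘ₗ (AddMonoidAlgebra.coeffLinearEquiv R).toLinearMap

lemma dpOp_monomial (R : Type*) [CommRing R] (σ : Type*) [Fintype σ] (n m : σ →₀ ℕ) (a : R) :
    dpOp R σ n (MvPolynomial.monomial m a)
      = (∏ i, Nat.choose (m i) (n i)) • MvPolynomial.monomial (m - n) a := by
  have h : (AddMonoidAlgebra.coeffLinearEquiv R) (MvPolynomial.monomial m a : MvPolynomial σ R)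
      = Finsupp.single m a := rfl
  rw [dpOp, LinearMap.comp_apply, LinearEquiv.coe_coe, h]
  erw [Finsupp.lsum_single]
  rfl

lemma choose_p_mul (p : ℕ) (hp : p.Prime) (m n : ℕ) :
    Nat.choose (p * m) (p * n) ≡ Nat.choose m n [MOD p] := by
  haveI : Fact p.Prime := ⟨hp⟩
  have h := Choose.choose_modEq_choose_mod_mul_choose_div_nat (n := p * m) (k := p * n) (p := p)
  simpa [Nat.mul_mod_right, Nat.mul_div_cancel_left _ hp.pos, Nat.mul_mod_left] using h

/-- In characteristic `p`, the divided-power operators satisfy `D_(p•n) (f^p) = (D_n f)^p`. -/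
theorem dpOp_p_smul_pow (p : ℕ) (hp : p.Prime) (R : Type*) [CommRing R] [CharP R p]
    (σ : Type*) [Fintype σ] (n : σ →₀ ℕ) (f : MvPolynomial σ R) :
    dpOp R σ (p • n) (f ^ p) = (dpOp R σ n f) ^ p := by
  haveI : Fact p.Prime := ⟨hp⟩
  haveI : ExpChar (MvPolynomial σ R) p := ExpChar.prime hp
  have key : ∀ (m : σ →₀ ℕ) (a : R),
      dpOp R σ (p • n) ((MvPolynomial.monomial m a) ^ p)
        = (dpOp R σ n (MvPolynomial.monomial m a)) ^ p := by
    intro m a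
    rw [MvPolynomial.monomial_pow, dpOp_monomial, dpOp_monomial, smul_pow,
      MvPolynomial.monomial_pow]
    have hsub : p • m - p • n = p • (m - n) := by
      ext i
      simp [Nat.mul_sub]
    rw [hsub]
    have h1 : ((∏ i, Nat.choose ((p • m) i) ((p • n) i) : ℕ) : MvPolynomial σ R)
        = ((∏ i, Nat.choose (m i) (n i) : ℕ) : MvPolynomial σ R) := by
      push_cast
      refine Finset.prod_congr rfl fun i _ => ?_
      apply CharP.natCast_eq_natCast' (MvPolynomial σ R) p
      simpa using choose_p_mul p hp (m i) (n i)
    have h2 : ((∏ i, Nat.choose (m i) (n i) : ℕ) : MvPolynomial σ R) ^ p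
        = ((∏ i, Nat.choose (m i) (n i) : ℕ) : MvPolynomial σ R) := by
      rw [← frobenius_def]
      exact map_natCast (frobenius (MvPolynomial σ R) p) _
    rw [nsmul_eq_mul, nsmul_eq_mul, h1, ← h2, Nat.cast_pow]
  calc dpOp R σ (p • n) (f ^ p)
      = dpOp R σ (p • n) ((∑ m ∈ f.support, MvPolynomial.monomial m (f.coeff m)) ^ p) := by
        rw [← MvPolynomial.as_sum f]
    _ = ∑ m ∈ f.support, dpOp R σ (p • n) ((MvPolynomial.monomial m (f.coeff m)) ^ p) := by
        rw [sum_pow_char, map_sum]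
    _ = ∑ m ∈ f.support, (dpOp R σ n (MvPolynomial.monomial m (f.coeff m))) ^ p := by
        exact Finset.sum_congr rfl fun m _ => key m (f.coeff m)
    _ = (∑ m ∈ f.support, dpOp R σ n (MvPolynomial.monomial m (f.coeff m))) ^ p := by
        rw [sum_pow_char]
    _ = (dpOp R σ n f) ^ p := by rw [← map_sum, ← MvPolynomial.as_sum f]
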